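/- Let a_N = ((2N-2)/(N-2))^{1/(N-1)} and ε_N = (a_N - 1)/(2a_N - 1) for integers N ≥ 3. Then N·ε_N converges to ln(2) as N → ∞. -/

import Mathlib

open Filter

/-- `a_N = ((2N-2)/(N-2))^(1/(N-1))`. -/
noncomputable def aN (N : ℕ) : ℝ :=
  ((2 * (N : ℝ) - 2) / ((N : ℝ) - 2)) ^ ((1 : ℝ) / ((N : ℝ) - 1))

/-- `ε_N = (a_N - 1)/(2a_N - 1)`, the maximizer of the expected cluster count. -/
noncomputable def epsN (N : ℕ) : ℝ := (aN N - 1) / (2 * aN N - 1)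

section Aux
open Real Topology

noncomputable def cN (N : ℕ) : ℝ :=
  Real.log ((2 * (N : ℝ) - 2) / ((N : ℝ) - 2)) / ((N : ℝ) - 1)

lemma cN_pos {N : ℕ} (hN : 3 ≤ N) : 0 < cN N := by
  have hn : (3 : ℝ) ≤ (N : ℝ) := by exact_mod_cast hN
  have h1 : (0:ℝ) < (N:ℝ) - 2 := by linarith
  have hb : 1 < (2 * (N : ℝ) - 2) / ((N : ℝ) - 2) := by
    rw [lt_div_iff₀ h1]; linarith
  exact div_pos (Real.log_pos hb) (by linarith)

lemma aN_eq {N : ℕ} (hN : 3 ≤ N) : aN N = Real.exp (cN N) := by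
  have hn : (3 : ℝ) ≤ (N : ℝ) := by exact_mod_cast hN
  have h1 : (0:ℝ) < (N:ℝ) - 2 := by linarith
  have hb : 0 < (2 * (N : ℝ) - 2) / ((N : ℝ) - 2) :=
    div_pos (by linarith) h1
  rw [aN, Real.rpow_def_of_pos hb, cN]
  ring_nf

lemma tendsto_sub_atTop (c : ℝ) : Tendsto (fun N : ℕ => (N : ℝ) - c) atTop atTop :=
  tendsto_atTop_add_const_right atTop (-c) tendsto_natCast_atTop_atTop

lemma tendsto_logb : Tendsto (fun N : ℕ => Real.log ((2 * (N : ℝ) - 2) / ((N : ℝ) - 2)))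
    atTop (nhds (Real.log 2)) := by
  have hb : Tendsto (fun N : ℕ => (2 * (N : ℝ) - 2) / ((N : ℝ) - 2)) atTop (nhds 2) := by
    have h1 : Tendsto (fun N : ℕ => 2 + 2 / ((N : ℝ) - 2)) atTop (nhds 2) := by
      have := (tendsto_inv_atTop_zero.comp (tendsto_sub_atTop 2)).const_mul (2:ℝ)
      have h := (tendsto_const_nhds (x := (2:ℝ)) (f := atTop (α := ℕ))).add this
      simpa [div_eq_mul_inv, Function.comp] using h
    refine h1.congr' ?_
    filter_upwards [eventually_ge_atTop 3] with N hN
    have hn : (3 : ℝ) ≤ (N : ℝ) := by exact_mod_cast hN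
    have h2 : ((N:ℝ) - 2) ≠ 0 := by linarith
    field_simp
    ring
  exact ((Real.continuousAt_log (by norm_num)).tendsto).comp hb

lemma tendsto_cN : Tendsto cN atTop (nhds 0) := by
  have h0 : Tendsto (fun N : ℕ => ((N : ℝ) - 1)⁻¹) atTop (nhds 0) :=
    tendsto_inv_atTop_zero.comp (tendsto_sub_atTop 1)
  have := tendsto_logb.mul h0
  rw [mul_zero] at this
  refine Tendsto.congr (fun N => ?_) this
  simp [cN, div_eq_mul_inv]

lemma tendsto_NcN : Tendsto (fun N : ℕ => (N : ℝ) * cN N) atTop (nhds (Real.log 2)) := by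
  have h0 : Tendsto (fun N : ℕ => ((N : ℝ) - 1)⁻¹) atTop (nhds 0) :=
    tendsto_inv_atTop_zero.comp (tendsto_sub_atTop 1)
  have hr : Tendsto (fun N : ℕ => 1 + ((N : ℝ) - 1)⁻¹) atTop (nhds 1) := by
    have := (tendsto_const_nhds (x := (1:ℝ)) (f := atTop (α := ℕ))).add h0
    simpa using this
  have key := hr.mul tendsto_logb
  rw [one_mul] at key
  refine key.congr' ?_
  filter_upwards [eventually_ge_atTop 3] with N hN
  have hn : (3 : ℝ) ≤ (N : ℝ) := by exact_mod_cast hN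
  have h2 : ((N:ℝ) - 1) ≠ 0 := by linarith
  rw [cN]
  field_simp
  ring

/-- `N · ε_N → ln 2` as `N → ∞`. -/
theorem mode_asymptotics : Tendsto (fun N : ℕ => (N : ℝ) * epsN N) atTop (nhds (Real.log 2)) := by
  have hc0 : Tendsto cN atTop (nhds 0) := tendsto_cN
  have hcne : ∀ᶠ N : ℕ in atTop, cN N ≠ 0 := by
    filter_upwards [eventually_ge_atTop 3] with N hN using (cN_pos hN).ne'
  have hcw : Tendsto cN atTop (𝓝[≠] (0:ℝ)) :=
    tendsto_nhdsWithin_of_tendsto_nhds_of_eventually_within _ hc0 hcne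
  have hslope : Tendsto (fun x : ℝ => (Real.exp x - 1) / x) (𝓝[≠] (0:ℝ)) (nhds 1) := by
    have h := hasDerivAt_iff_tendsto_slope.mp (Real.hasDerivAt_exp 0)
    rw [Real.exp_zero] at h
    refine h.congr' ?_
    filter_upwards [self_mem_nhdsWithin] with x hx
    simp [slope, Real.exp_zero, div_eq_inv_mul]
  have hg : Tendsto (fun N : ℕ => (Real.exp (cN N) - 1) / cN N) atTop (nhds 1) :=
    hslope.comp hcw
  have hexp : Tendsto (fun N : ℕ => Real.exp (cN N)) atTop (nhds 1) := by
    have := (Real.continuous_exp.tendsto 0).comp hc0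
    simpa [Function.comp_def] using this
  have hinv : Tendsto (fun N : ℕ => (2 * Real.exp (cN N) - 1)⁻¹) atTop (nhds 1) := by
    have h2 := (hexp.const_mul 2).sub_const 1
    norm_num at h2
    simpa using h2.inv₀ (by norm_num)
  have key : Tendsto (fun N : ℕ =>
      ((N : ℝ) * cN N * ((Real.exp (cN N) - 1) / cN N)) * (2 * Real.exp (cN N) - 1)⁻¹)
      atTop (nhds (Real.log 2)) := by
    have := (tendsto_NcN.mul hg).mul hinv
    simpa using this
  refine key.congr' ?_
  filter_upwards [eventually_ge_atTop 3] with N hN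
  have hc := cN_pos hN
  have he : (1:ℝ) < Real.exp (cN N) := by
    rw [← Real.exp_zero]; exact Real.exp_lt_exp.mpr hc
  have h2 : 2 * Real.exp (cN N) - 1 ≠ 0 := by linarith
  rw [epsN, aN_eq hN]
  field_simp [hc.ne']

end Aux
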